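/- For every integer m ≥ 1 and n = 3m² − 3m + 1 (the number of points in a hexagonal grid with m points on each side), there exists a collection of at most 6m − 3 complete bipartite subgraphs of the complete graph K_n such that every edge of K_n is contained in exactly 2 or exactly 3 members of the collection. Consequently bp_{{2,3}}(K_n) ≤ 6m − 3 < 2√3·√n. -/
import Mathlib


/-- A complete `r`-partite `r`-graph on vertex type `V`: `r` pairwise disjoint nonempty
finite parts; its edges are the `r`-sets containing exactly one vertex from each part. -/
structure CompleteMultipartite (r : ℕ) (V : Type*) where
  parts : Fin r → Finset V
  parts_nonempty : ∀ i, (parts i).Nonempty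
  parts_disjoint : ∀ i j, i ≠ j → Disjoint (parts i) (parts j)

namespace CompleteMultipartite

/-- The edge set of a complete `r`-partite `r`-graph: all `r`-sets obtained by choosing
one vertex from each part. -/
def edges {r : ℕ} {V : Type*} (B : CompleteMultipartite r V) : Set (Finset V) :=
  {e | ∃ f : Fin r → V, (∀ i, f i ∈ B.parts i) ∧ ∀ v, v ∈ e ↔ ∃ i, v = f i}

/-- The order (number of vertices) of a complete `r`-partite `r`-graph. -/
def order {r : ℕ} {V : Type*} (B : CompleteMultipartite r V) : ℕ :=
  ∑ i, (B.parts i).card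

end CompleteMultipartite

namespace Stmt0Aux

/-- Build a biclique (complete bipartite graph) from two disjoint nonempty finsets. -/
def mkCM {V : Type*} (p0 p1 : Finset V) (h0 : p0.Nonempty) (h1 : p1.Nonempty)
    (hd : Disjoint p0 p1) : CompleteMultipartite 2 V where
  parts := ![p0, p1]
  parts_nonempty := by
    intro i
    fin_cases i <;> simp only [Matrix.cons_val_zero, Matrix.cons_val_one, Matrix.head_cons]
    exacts [h0, h1]
  parts_disjoint := by
    intro i j hij
    fin_cases i <;> fin_cases j <;>
      simp only [Matrix.cons_val_zero, Matrix.cons_val_one, Matrix.head_cons] <;>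
      first
        | exact (hij rfl).elim
        | exact hd
        | exact hd.symm

lemma mem_edges_mkCM {V : Type*} [DecidableEq V] {p0 p1 : Finset V} {h0 : p0.Nonempty}
    {h1 : p1.Nonempty} {hd : Disjoint p0 p1} {u v : V} (huv : u ≠ v) :
    ({u, v} : Finset V) ∈ (mkCM p0 p1 h0 h1 hd).edges ↔
      (u ∈ p0 ∧ v ∈ p1) ∨ (v ∈ p0 ∧ u ∈ p1) := by
  constructor
  · rintro ⟨f, hf, hchar⟩
    have hu : u = f 0 ∨ u = f 1 := by
      have := (hchar u).mp (by simp)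
      rwa [Fin.exists_fin_two] at this
    have hv : v = f 0 ∨ v = f 1 := by
      have := (hchar v).mp (by simp)
      rwa [Fin.exists_fin_two] at this
    have h0' : f 0 ∈ p0 := by simpa [mkCM] using hf 0
    have h1' : f 1 ∈ p1 := by simpa [mkCM] using hf 1
    rcases hu with hu | hu <;> rcases hv with hv | hv
    · exact absurd (hu.trans hv.symm) huv
    · exact Or.inl ⟨hu ▸ h0', hv ▸ h1'⟩
    · exact Or.inr ⟨hv ▸ h0', hu ▸ h1'⟩
    · exact absurd (hu.trans hv.symm) huv
  · rintro (⟨hu, hv⟩ | ⟨hv, hu⟩)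
    · exact ⟨![u, v], by intro i; fin_cases i <;> simp [mkCM, hu, hv], by
        intro w; simp [Fin.exists_fin_two]⟩
    · exact ⟨![v, u], by intro i; fin_cases i <;> simp [mkCM, hu, hv], by
        intro w; simp [Fin.exists_fin_two]; tauto⟩

/-- The three "directions" of lines in the (sheared) hexagonal grid. -/
def gdir (M : ℕ) (d : Fin 3) (p : ℕ × ℕ) : ℕ :=
  if d = 0 then p.1 else if d = 1 then p.2 else p.1 + p.2 - M

/-- Membership in the (sheared) hexagonal region with `M` points on each side. -/
def InHex (M : ℕ) (p : ℕ × ℕ) : Prop :=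
  p.1 < 2 * M ∧ p.2 < 2 * M ∧ M ≤ p.1 + p.2 ∧ p.1 + p.2 < 3 * M

lemma gdir_lt {M : ℕ} {p : ℕ × ℕ} (hp : InHex M p) (d : Fin 3) : gdir M d p < 2 * M := by
  obtain ⟨h1, h2, h3, h4⟩ := hp
  fin_cases d <;> simp [gdir] <;> omega

/-- Two distinct points of the hexagon lie on a common line in at most one direction. -/
lemma gdir_pair {M : ℕ} {p q : ℕ × ℕ} (hp : InHex M p) (hq : InHex M q) (hne : p ≠ q)
    {d d' : Fin 3} (hdd : d ≠ d') (h : gdir M d p = gdir M d q) :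
    gdir M d' p ≠ gdir M d' q := by
  obtain ⟨h1, h2, h3, h4⟩ := hp
  obtain ⟨h5, h6, h7, h8⟩ := hq
  have hne' : ¬(p.1 = q.1 ∧ p.2 = q.2) := fun ⟨a, b⟩ => hne (Prod.ext a b)
  fin_cases d <;> fin_cases d' <;>
    first
      | exact absurd rfl hdd
      | (simp [gdir] at h ⊢; omega)

set_option linter.unreachableTactic false in
set_option linter.unusedTactic false in
/-- Two distinct points of the hexagon differ in exactly 2 or exactly 3 directions. -/
lemma card_diff {M : ℕ} {p q : ℕ × ℕ} (hp : InHex M p) (hq : InHex M q) (hne : p ≠ q) :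
    Nat.card {d : Fin 3 // gdir M d p ≠ gdir M d q} = 2 ∨
    Nat.card {d : Fin 3 // gdir M d p ≠ gdir M d q} = 3 := by
  classical
  rw [Nat.card_eq_fintype_card, Fintype.card_subtype, Finset.card_filter, Fin.sum_univ_three]
  have h01 := fun h => gdir_pair hp hq hne (show (0 : Fin 3) ≠ 1 by decide) h
  have h02 := fun h => gdir_pair hp hq hne (show (0 : Fin 3) ≠ 2 by decide) h
  have h12 := fun h => gdir_pair hp hq hne (show (1 : Fin 3) ≠ 2 by decide) h
  by_cases d0 : gdir M 0 p = gdir M 0 q <;>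
  by_cases d1 : gdir M 1 p = gdir M 1 q <;>
  by_cases d2 : gdir M 2 p = gdir M 2 q <;>
    simp [d0, d1, d2] <;>
    first
      | omega
      | exact absurd (h01 d0) (by simpa using d1)
      | exact absurd (h02 d0) (by simpa using d2)
      | exact absurd (h12 d1) (by simpa using d2)

variable (M n : ℕ) (φ : Fin n → ℕ × ℕ)

/-- One side of the biclique indexed by a direction and a threshold: the vertices on the
line with the given coordinate value. -/
def part0 (x : Fin 3 × Fin (2 * M - 1)) : Finset (Fin n) :=
  Finset.univ.filter (fun v => gdir M x.1 (φ v) = (x.2 : ℕ))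

/-- The other side: vertices whose coordinate strictly exceeds the threshold. -/
def part1 (x : Fin 3 × Fin (2 * M - 1)) : Finset (Fin n) :=
  Finset.univ.filter (fun v => (x.2 : ℕ) < gdir M x.1 (φ v))

/-- The indices whose two sides are both nonempty. -/
def goodIdx : Finset (Fin 3 × Fin (2 * M - 1)) :=
  Finset.univ.filter (fun x => (part0 M n φ x).Nonempty ∧ (part1 M n φ x).Nonempty)

/-- The collection of bicliques. -/
noncomputable def Bdef (j : Fin (goodIdx M n φ).card) : CompleteMultipartite 2 (Fin n) :=
  mkCM (part0 M n φ ((goodIdx M n φ).equivFin.symm j).1)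
    (part1 M n φ ((goodIdx M n φ).equivFin.symm j).1)
    ((Finset.mem_filter.mp ((goodIdx M n φ).equivFin.symm j).2).2.1)
    ((Finset.mem_filter.mp ((goodIdx M n φ).equivFin.symm j).2).2.2)
    (Finset.disjoint_left.mpr (fun v hv hv' => by
      simp only [part0, part1, Finset.mem_filter] at hv hv'
      omega))

/-- The number of bicliques covering the edge `{u, v}` equals the number of directions
in which `φ u` and `φ v` differ. -/
lemma count_cover (hM : 1 ≤ M) (hb : ∀ v, InHex M (φ v)) {u v : Fin n} (huv : u ≠ v) :
    Nat.card {j : Fin (goodIdx M n φ).card //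
        ({u, v} : Finset (Fin n)) ∈ (Bdef M n φ j).edges} =
      Nat.card {d : Fin 3 // gdir M d (φ u) ≠ gdir M d (φ v)} := by
  classical
  have hmemS : ∀ x : Fin 3 × Fin (2 * M - 1),
      (gdir M x.1 (φ u) ≠ gdir M x.1 (φ v) ∧
        (x.2 : ℕ) = min (gdir M x.1 (φ u)) (gdir M x.1 (φ v))) → x ∈ goodIdx M n φ := by
    intro x hx
    simp only [goodIdx, Finset.mem_filter, Finset.mem_univ, true_and]
    rcases le_or_gt (gdir M x.1 (φ u)) (gdir M x.1 (φ v)) with hle | hlt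
    · exact ⟨⟨u, by simp only [part0, Finset.mem_filter, Finset.mem_univ, true_and]; omega⟩,
        ⟨v, by simp only [part1, Finset.mem_filter, Finset.mem_univ, true_and]; omega⟩⟩
    · exact ⟨⟨v, by simp only [part0, Finset.mem_filter, Finset.mem_univ, true_and]; omega⟩,
        ⟨u, by simp only [part1, Finset.mem_filter, Finset.mem_univ, true_and]; omega⟩⟩
  have hcovj : ∀ j : Fin (goodIdx M n φ).card,
      (({u, v} : Finset (Fin n)) ∈ (Bdef M n φ j).edges) ↔
        (gdir M ((goodIdx M n φ).equivFin.symm j).1.1 (φ u) ≠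
            gdir M ((goodIdx M n φ).equivFin.symm j).1.1 (φ v) ∧
          (((goodIdx M n φ).equivFin.symm j).1.2 : ℕ) =
            min (gdir M ((goodIdx M n φ).equivFin.symm j).1.1 (φ u))
              (gdir M ((goodIdx M n φ).equivFin.symm j).1.1 (φ v))) := by
    intro j
    rw [Bdef, mem_edges_mkCM huv]
    simp only [part0, part1, Finset.mem_filter, Finset.mem_univ, true_and]
    omega
  apply Nat.card_congr
  have E1 := Equiv.subtypeEquiv
    (p := fun j => ({u, v} : Finset (Fin n)) ∈ (Bdef M n φ j).edges)
    (q := fun s : {x // x ∈ goodIdx M n φ} =>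
      gdir M s.1.1 (φ u) ≠ gdir M s.1.1 (φ v) ∧
        (s.1.2 : ℕ) = min (gdir M s.1.1 (φ u)) (gdir M s.1.1 (φ v)))
    (goodIdx M n φ).equivFin.symm (fun j => hcovj j)
  have E2 := Equiv.subtypeSubtypeEquivSubtypeInter
    (fun x : Fin 3 × Fin (2 * M - 1) => x ∈ goodIdx M n φ)
    (fun x : Fin 3 × Fin (2 * M - 1) =>
      gdir M x.1 (φ u) ≠ gdir M x.1 (φ v) ∧
        (x.2 : ℕ) = min (gdir M x.1 (φ u)) (gdir M x.1 (φ v)))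
  have E3 := Equiv.subtypeEquivRight
    (p := fun x : Fin 3 × Fin (2 * M - 1) => x ∈ goodIdx M n φ ∧
      (gdir M x.1 (φ u) ≠ gdir M x.1 (φ v) ∧
        (x.2 : ℕ) = min (gdir M x.1 (φ u)) (gdir M x.1 (φ v))))
    (q := fun x : Fin 3 × Fin (2 * M - 1) =>
      gdir M x.1 (φ u) ≠ gdir M x.1 (φ v) ∧
        (x.2 : ℕ) = min (gdir M x.1 (φ u)) (gdir M x.1 (φ v)))
    (fun x => ⟨fun h => h.2, fun h => ⟨hmemS x h, h⟩⟩)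
  refine (E1.trans (E2.trans E3)).trans ?_
  refine ⟨fun x => ⟨x.1.1, x.2.1⟩, fun d => ⟨(d.1,
    ⟨min (gdir M d.1 (φ u)) (gdir M d.1 (φ v)), ?_⟩), d.2, rfl⟩, ?_, ?_⟩
  · have h1 := gdir_lt (hb u) d.1
    have h2 := gdir_lt (hb v) d.1
    have h3 := d.2
    omega
  · rintro ⟨⟨d, q⟩, h1, h2⟩
    exact Subtype.ext (Prod.ext rfl (Fin.ext h2.symm))
  · intro d; rfl

/-- Main construction: from an injective hexagonal embedding of the vertex set one gets
at most `6M - 3` bicliques covering every edge exactly 2 or 3 times. -/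
theorem main (hM : 1 ≤ M) (hinj : Function.Injective φ) (hb : ∀ v, InHex M (φ v)) :
    ∃ (t : ℕ) (B : Fin t → CompleteMultipartite 2 (Fin n)),
      t ≤ 6 * M - 3 ∧
      ∀ e : Finset (Fin n), e.card = 2 →
        Nat.card {j : Fin t // e ∈ (B j).edges} = 2 ∨
        Nat.card {j : Fin t // e ∈ (B j).edges} = 3 := by
  classical
  refine ⟨(goodIdx M n φ).card, Bdef M n φ, ?_, ?_⟩
  · calc (goodIdx M n φ).card ≤ (Finset.univ : Finset (Fin 3 × Fin (2 * M - 1))).card :=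
        Finset.card_le_univ _
      _ ≤ 6 * M - 3 := by
        rw [Finset.card_univ]
        simp [Fintype.card_prod]
        omega
  · intro e he
    obtain ⟨u, v, huv, rfl⟩ := Finset.card_eq_two.mp he
    have hφne : φ u ≠ φ v := fun h => huv (hinj h)
    rw [count_cover M n φ hM hb huv]
    exact card_diff (hb u) (hb v) hφne

/-- The map packing `Fin 3 × Fin m × Fin m` injectively into the hexagon
`{(a,b) : a,b < 2m, m ≤ a+b < 3m}` (the rhombille decomposition of the hexagon). -/
def psi (m : ℕ) (x : Fin 3 × Fin m × Fin m) : ℕ × ℕ :=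
  if x.1 = 0 then ((x.2.1 : ℕ), m + (x.2.2 : ℕ))
  else if x.1 = 1 then (m + (x.2.1 : ℕ), (x.2.2 : ℕ))
  else if (x.2.1 : ℕ) + (x.2.2 : ℕ) < m then (m + (x.2.1 : ℕ), m + (x.2.2 : ℕ))
  else ((x.2.1 : ℕ), (x.2.2 : ℕ))

lemma psi_bounds (m : ℕ) (hm : 1 ≤ m) (x : Fin 3 × Fin m × Fin m) : InHex m (psi m x) := by
  obtain ⟨d, i, j⟩ := x
  have hi := i.isLt
  have hj := j.isLt
  unfold InHex
  fin_cases d <;> simp [psi] <;> (try split_ifs) <;> omega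

lemma psi_inj (m : ℕ) : Function.Injective (psi m) := by
  rintro ⟨d1, i1, j1⟩ ⟨d2, i2, j2⟩ h
  have b1 := i1.isLt; have b2 := j1.isLt; have b3 := i2.isLt; have b4 := j2.isLt
  fin_cases d1 <;> fin_cases d2 <;>
    simp [psi, Prod.ext_iff] at h <;>
    (try split_ifs at h) <;>
    simp_all [Prod.ext_iff, Fin.ext_iff] <;> omega

end Stmt0Aux

/-- For every integer `m ≥ 1` and `n = 3m² − 3m + 1`, there is a
collection of at most `6m − 3` complete bipartite subgraphs of `K_n` such that every
edge of `K_n` lies in exactly 2 or exactly 3 members; consequently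
`bp_{{2,3}}(K_n) ≤ 6m − 3 < 2√3·√n`. -/
theorem statement0 (m : ℕ) (hm : 1 ≤ m) :
    (∃ (t : ℕ) (B : Fin t → CompleteMultipartite 2 (Fin (3 * m ^ 2 - 3 * m + 1))),
      t ≤ 6 * m - 3 ∧
      ∀ e : Finset (Fin (3 * m ^ 2 - 3 * m + 1)), e.card = 2 →
        Nat.card {j : Fin t // e ∈ (B j).edges} = 2 ∨
        Nat.card {j : Fin t // e ∈ (B j).edges} = 3) ∧
    ((6 * m - 3 : ℕ) : ℝ) <
      2 * Real.sqrt 3 * Real.sqrt ((3 * m ^ 2 - 3 * m + 1 : ℕ) : ℝ) := by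
  constructor
  · -- the biclique construction
    have hmm : 1 * 1 ≤ m * m := Nat.mul_le_mul hm hm
    have hle : 3 * m ^ 2 - 3 * m + 1 ≤ 3 * (m * m) := by
      rw [pow_two]
      generalize m * m = a at hmm ⊢
      omega
    set φ : Fin (3 * m ^ 2 - 3 * m + 1) → ℕ × ℕ := fun v =>
      Stmt0Aux.psi m (Prod.map id finProdFinEquiv.symm
        (finProdFinEquiv.symm (Fin.castLE hle v))) with hφ
    have hinj : Function.Injective φ := by
      intro a b h
      have h1 := Stmt0Aux.psi_inj m h
      have h2 := Function.Injective.prodMap Function.injective_id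
        (Equiv.injective finProdFinEquiv.symm) h1
      have h3 := Equiv.injective finProdFinEquiv.symm h2
      exact Fin.castLE_injective hle h3
    have hb : ∀ v, Stmt0Aux.InHex m (φ v) := fun v => Stmt0Aux.psi_bounds m hm _
    exact Stmt0Aux.main m (3 * m ^ 2 - 3 * m + 1) φ hm hinj hb
  · -- the numerical inequality
    obtain ⟨k, rfl⟩ : ∃ k, m = k + 1 := ⟨m - 1, by omega⟩
    have hn : 3 * (k + 1) ^ 2 - 3 * (k + 1) + 1 = 3 * k ^ 2 + 3 * k + 1 := by
      have e1 : (k + 1) ^ 2 = k ^ 2 + 2 * k + 1 := by ring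
      rw [e1]
      generalize k ^ 2 = a
      omega
    have ht : 6 * (k + 1) - 3 = 6 * k + 3 := by omega
    rw [hn, ht]
    have h12 : (2 : ℝ) * Real.sqrt 3 = Real.sqrt 12 := by
      rw [show (12 : ℝ) = 2 ^ 2 * 3 by norm_num, Real.sqrt_mul (by positivity),
        Real.sqrt_sq (by norm_num)]
    rw [h12, ← Real.sqrt_mul (by norm_num)]
    apply (Real.lt_sqrt (by positivity)).mpr
    push_cast
    nlinarith [sq_nonneg ((k : ℝ))]
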